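/- arXiv:1511.02307 — 3 statements merged into one kernel-verified Lean document; each statement's English description precedes it below -/
import Mathlib

section
/- Let Ω be a measurable space and f₁,…,f_K : Ω → ℝ be measurable functions. Then for any probability measure P on Ω (for which all f_i are integrable), there exists a probability measure P' on Ω whose support has at most K+1 points such that ∫ f_i dP = ∫ f_i dP' for every 1 ≤ i ≤ K. -/
open MeasureTheory

section helpers

lemma coord_sum_single {n : ℕ} (a : Fin n → ℝ) (j : Fin n) :
    (∑ i, a i • EuclideanSpace.single i (1:ℝ)) j = a j := by
  rw [WithLp.ofLp_sum, Finset.sum_apply j Finset.univ (fun i => (a i • EuclideanSpace.single i (1:ℝ)).ofLp)]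
  have : ∀ i : Fin n, (a i • EuclideanSpace.single i (1:ℝ)) j = a i * (if j = i then 1 else 0) := by
    intro i
    rw [show (a i • EuclideanSpace.single i (1:ℝ)) j
        = a i * (EuclideanSpace.single i (1:ℝ)) j from rfl, EuclideanSpace.single_apply]
  simp [this, mul_ite]

lemma sum_single_eq {n : ℕ} (y : EuclideanSpace ℝ (Fin n)) :
    ∑ i, y i • EuclideanSpace.single i (1:ℝ) = y := by
  ext j
  exact coord_sum_single (fun i => y i) j

lemma integrable_dirac' {Ω : Type*} [MeasurableSpace Ω] {h : Ω → ℝ} (hh : Measurable h) (a : Ω) :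
    Integrable h (Measure.dirac a) := by
  refine ⟨hh.stronglyMeasurable.aestronglyMeasurable, ?_⟩
  rw [HasFiniteIntegral, lintegral_dirac' _ hh.enorm]
  exact enorm_lt_top

lemma integral_discrete {Ω : Type*} [MeasurableSpace Ω] {n : ℕ} (x : Fin n → Ω) (p : Fin n → ℝ)
    (hp : ∀ j, 0 ≤ p j) {h : Ω → ℝ} (hh : Measurable h) :
    ∫ a, h a ∂(Measure.sum (fun j => ENNReal.ofReal (p j) • Measure.dirac (x j)))
      = ∑ j, p j * h (x j) := by
  rw [Measure.sum_fintype,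
    integral_finset_sum_measure (fun j _ => ((integrable_dirac' hh (x j)).smul_measure
      ENNReal.ofReal_ne_top))]
  refine Finset.sum_congr rfl fun j _ => ?_
  rw [integral_smul_measure, integral_dirac' h (x j) hh.stronglyMeasurable, smul_eq_mul,
    ENNReal.toReal_ofReal (hp j)]

lemma le_of_lt_on_interior {E : Type*} [NormedAddCommGroup E] [NormedSpace ℝ E] {C : Set E}
    (hC : Convex ℝ C) {x₀ y : E} (hx₀ : x₀ ∈ interior C) (hy : y ∈ closure C)
    (ℓ : E →L[ℝ] ℝ) (r : ℝ) (h : ∀ z ∈ interior C, ℓ z < r) : ℓ y ≤ r := by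
  have ha : Filter.Tendsto (fun n : ℕ => (1:ℝ)/(n+1)) Filter.atTop (nhds 0) :=
    tendsto_one_div_add_atTop_nhds_zero_nat
  have hmem : ∀ n : ℕ, ((1:ℝ)/(n+1)) • x₀ + (1 - (1:ℝ)/(n+1)) • y ∈ interior C := by
    intro n
    refine hC.combo_interior_closure_mem_interior hx₀ hy (by positivity) ?_ (by ring)
    have h1 : (1:ℝ)/(n+1) ≤ 1 := by
      rw [div_le_one (by positivity)]; linarith [Nat.cast_nonneg (α := ℝ) n]
    linarith
  have htend : Filter.Tendsto
      (fun n : ℕ => ((1:ℝ)/(n+1)) * ℓ x₀ + (1 - (1:ℝ)/(n+1)) * ℓ y)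
      Filter.atTop (nhds (ℓ y)) := by
    have := ((ha.mul_const (ℓ x₀)).add (((tendsto_const_nhds (x := (1:ℝ))).sub ha).mul_const (ℓ y)))
    simpa using this
  refine le_of_tendsto htend (Filter.Eventually.of_forall fun n => ?_)
  have := h _ (hmem n)
  simpa [map_add, _root_.map_smul, smul_eq_mul] using this.le

end helpers

theorem key_moment (K : ℕ) :
    ∀ {Ω : Type u_1} [MeasurableSpace Ω] (f : Fin K → Ω → ℝ), (∀ i, Measurable (f i)) →
    ∀ (P : Measure Ω) [IsProbabilityMeasure P], (∀ i, Integrable (f i) P) →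
    ∃ (x : Fin (K + 1) → Ω) (p : Fin (K + 1) → ℝ),
      (∀ j, 0 ≤ p j) ∧ (∑ j, p j = 1) ∧
      ∀ i, ∫ a, f i a ∂P = ∑ j, p j * f i (x j) := by
  induction K with
  | zero =>
    intro Ω _ f hf P hP hint
    have hne : Nonempty Ω := by
      by_contra h
      rw [not_nonempty_iff] at h
      have h1 := measure_univ (μ := P)
      rw [Set.univ_eq_empty_iff.2 h, measure_empty] at h1
      exact zero_ne_one h1
    obtain ⟨ω₀⟩ := hne
    exact ⟨fun _ => ω₀, fun _ => 1, fun _ => zero_le_one, by simp, fun i => i.elim0⟩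
  | succ m ih =>
    intro Ω _ f hf P hP hint
    have hne : Nonempty Ω := by
      by_contra h
      rw [not_nonempty_iff] at h
      have h1 := measure_univ (μ := P)
      rw [Set.univ_eq_empty_iff.2 h, measure_empty] at h1
      exact zero_ne_one h1
    obtain ⟨ω₀⟩ := hne
    set g : Ω → EuclideanSpace ℝ (Fin (m+1)) :=
      fun ω => ∑ i, f i ω • EuclideanSpace.single i (1:ℝ) with hg
    have hgco : ∀ ω i, g ω i = f i ω := fun ω i => coord_sum_single (fun i => f i ω) i
    have hgint : Integrable g P := integrable_finset_sum _ (fun i _ => (hint i).smul_const _)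
    set v : EuclideanSpace ℝ (Fin (m+1)) := ∫ ω, g ω ∂P with hvdef
    have hv : v = ∑ i, (∫ ω, f i ω ∂P) • EuclideanSpace.single i (1:ℝ) := by
      rw [hvdef, hg, integral_finset_sum _ (fun i _ => (hint i).smul_const _)]
      exact Finset.sum_congr rfl fun i _ => integral_smul_const _ _
    have hvi : ∀ i, v i = ∫ ω, f i ω ∂P := by
      intro i; rw [hv]; exact coord_sum_single (fun i => ∫ ω, f i ω ∂P) i
    set C := convexHull ℝ (Set.range g) with hCdef
    have hCconv : Convex ℝ C := convex_convexHull ℝ _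
    by_cases hvC : v ∈ C
    · -- Carathéodory case
      obtain ⟨ι, hι, z, w, hzr, hAI, hw0, hw1, hwz⟩ := eq_pos_convex_span_of_mem_convexHull hvC
      letI := hι
      have h1 : Module.finrank ℝ (vectorSpan ℝ (Set.range z)) ≤ m+1 := by
        simpa [finrank_euclideanSpace_fin] using
          Submodule.finrank_le (vectorSpan ℝ (Set.range z))
      have hcard : Fintype.card ι ≤ m + 2 :=
        le_trans hAI.card_le_finrank_succ (by omega)
      choose ωz hωz using fun i => hzr (Set.mem_range_self i)
      set r := (m+2) - Fintype.card ι with hr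
      have hcr : Fintype.card ι + r = m + 2 := Nat.add_sub_cancel' hcard
      set e : ι ⊕ Fin r ≃ Fin (m+2) :=
        ((Fintype.equivFin ι).sumCongr (Equiv.refl (Fin r))).trans
          (finSumFinEquiv.trans (finCongr hcr)) with he
      set q : ι ⊕ Fin r → ℝ := Sum.elim w fun _ => 0 with hq
      set y : ι ⊕ Fin r → Ω := Sum.elim ωz fun _ => ω₀ with hy
      have hq0 : ∀ s, 0 ≤ q s := by rintro (i | k)
                                    · exact (hw0 i).le
                                    · exact le_refl 0
      refine ⟨y ∘ e.symm, q ∘ e.symm, fun j => hq0 _, ?_, ?_⟩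
      · rw [show ∑ j, (q ∘ e.symm) j = ∑ s, q s from Equiv.sum_comp e.symm q,
          Fintype.sum_sum_type]
        simp only [hq, Sum.elim_inl, Sum.elim_inr, Finset.sum_const_zero, add_zero]
        exact hw1
      · intro i
        have h2 : ∑ j, (q ∘ e.symm) j * f i ((y ∘ e.symm) j) = ∑ s, q s * f i (y s) :=
          Equiv.sum_comp e.symm (fun s => q s * f i (y s))
        rw [show (∫ a, f i a ∂P) = v i from (hvi i).symm, h2, Fintype.sum_sum_type]
        have h3 : v i = ∑ i', w i' * z i' i := by
          rw [← hwz, WithLp.ofLp_sum, Finset.sum_apply i Finset.univ (fun i' => (w i' • z i').ofLp)]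
          rfl
        rw [h3]
        simp only [hq, hy, Sum.elim_inl, Sum.elim_inr, zero_mul, Finset.sum_const_zero, add_zero]
        refine Finset.sum_congr rfl fun i' _ => ?_
        rw [← hωz i', hgco]
    · -- separation case
      have hvcl : v ∈ closure C := by
        refine hCconv.closure.integral_mem isClosed_closure
          (Filter.Eventually.of_forall fun ω => subset_closure
            (subset_convexHull ℝ _ (Set.mem_range_self ω))) hgint
      obtain ⟨ℓ, hℓ0, hℓle⟩ : ∃ ℓ : EuclideanSpace ℝ (Fin (m+1)) →L[ℝ] ℝ,
          ℓ ≠ 0 ∧ ∀ y ∈ closure C, ℓ y ≤ ℓ v := by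
        by_cases hintr : (interior C).Nonempty
        · obtain ⟨x₀, hx₀⟩ := hintr
          have hvni : v ∉ interior C := fun h => hvC (interior_subset h)
          obtain ⟨ℓ, hℓ⟩ := geometric_hahn_banach_open_point hCconv.interior isOpen_interior hvni
          refine ⟨ℓ, ?_, fun y hy => le_of_lt_on_interior hCconv hx₀ hy ℓ _ hℓ⟩
          rintro rfl
          simpa using hℓ x₀ hx₀
        · have hspan : affineSpan ℝ C ≠ ⊤ := by
            intro h
            exact hintr (hCconv.interior_nonempty_iff_affineSpan_eq_top.2 h)
          have hx₀C : g ω₀ ∈ C := subset_convexHull ℝ _ (Set.mem_range_self ω₀)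
          have hCne : C.Nonempty := ⟨g ω₀, hx₀C⟩
          have hdir : (affineSpan ℝ C).direction ≠ ⊤ := by
            intro h
            apply hspan
            rwa [AffineSubspace.direction_eq_top_iff_of_nonempty
              (hCne.mono (subset_affineSpan ℝ C))] at h
          obtain ⟨u, hu_mem, hu0⟩ : ∃ u, u ∈ (affineSpan ℝ C).directionᗮ ∧ u ≠ 0 := by
            by_contra hcon
            push_neg at hcon
            apply hdir
            rw [← Submodule.orthogonal_eq_bot_iff, Submodule.eq_bot_iff]
            exact hcon
          set ℓ : EuclideanSpace ℝ (Fin (m+1)) →L[ℝ] ℝ := innerSL ℝ u with hℓdef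
          have hconstAff : ∀ y ∈ (affineSpan ℝ C : Set (EuclideanSpace ℝ (Fin (m+1)))),
              ℓ y = ℓ (g ω₀) := by
            intro y hy
            have hd : y - g ω₀ ∈ (affineSpan ℝ C).direction :=
              AffineSubspace.vsub_mem_direction hy (subset_affineSpan ℝ C hx₀C)
            have : inner ℝ u (y - g ω₀) = (0:ℝ) := by
              rw [real_inner_comm]
              exact hu_mem _ hd
            have h2 : inner ℝ u y - inner ℝ u (g ω₀) = (0:ℝ) := by
              rwa [inner_sub_right] at this
            simp only [hℓdef, innerSL_apply_apply]
            linarith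
          have hconstCl : ∀ y ∈ closure C, ℓ y = ℓ (g ω₀) := by
            intro y hy
            have hsub : closure C ⊆ {y | ℓ y = ℓ (g ω₀)} := by
              refine closure_minimal ?_ (isClosed_eq ℓ.continuous continuous_const)
              intro y hy
              exact hconstAff y (subset_affineSpan ℝ C hy)
            exact hsub hy
          refine ⟨ℓ, ?_, fun y hy => ?_⟩
          · intro h
            apply hu0
            have : ℓ u = 0 := by rw [h]; rfl
            rw [hℓdef, innerSL_apply_apply] at this
            exact inner_self_eq_zero.1 this
          · rw [hconstCl y hy, hconstCl v hvcl]
      set c : Fin (m+1) → ℝ := fun i => ℓ (EuclideanSpace.single i 1) with hc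
      set d : ℝ := ℓ v with hd
      have hgl : ∀ ω, ℓ (g ω) = ∑ i, c i * f i ω := by
        intro ω
        rw [hg]
        simp only [map_sum]
        refine Finset.sum_congr rfl fun i _ => ?_
        rw [_root_.map_smul, smul_eq_mul, mul_comm, hc]
      have hex : ∃ j, c j ≠ 0 := by
        by_contra hcon
        push_neg at hcon
        apply hℓ0
        ext y
        rw [show y = ∑ i, y i • EuclideanSpace.single i (1:ℝ) from (sum_single_eq y).symm]
        simp only [map_sum, _root_.map_smul, smul_eq_mul]
        have hz : ∀ x : Fin (m+1), ℓ (EuclideanSpace.single x 1) = 0 := by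
          intro x
          rw [show ℓ (EuclideanSpace.single x 1) = c x from by rw [hc]]
          exact hcon x
        simp [hz]
      obtain ⟨j', hj'⟩ := hex
      have hae : ∀ᵐ ω ∂P, ∑ i, c i * f i ω = d := by
        have h1 : ∀ ω, ℓ (g ω) ≤ d := fun ω =>
          hℓle _ (subset_closure (subset_convexHull ℝ _ (Set.mem_range_self ω)))
        have hint2 : Integrable (fun ω => ℓ (g ω)) P := ℓ.integrable_comp hgint
        have h2 : ∫ ω, (d - ℓ (g ω)) ∂P = 0 := by
          rw [integral_sub (integrable_const d) hint2, ℓ.integral_comp_comm hgint]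
          simp [hd, hvdef]
        have h3 := (integral_eq_zero_iff_of_nonneg_ae
          (Filter.Eventually.of_forall fun ω => sub_nonneg.2 (h1 ω))
          ((integrable_const d).sub hint2)).1 h2
        filter_upwards [h3] with ω hω
        rw [← hgl ω]
        have : d - ℓ (g ω) = 0 := hω
        linarith
      set s : Set Ω := {ω | ∑ i, c i * f i ω = d} with hsdef
      have hs : MeasurableSet s :=
        measurableSet_eq_fun (Finset.measurable_sum _ fun i _ => (hf i).const_mul (c i))
          measurable_const
      have hPs : P s = 1 := by
        rw [← prob_compl_eq_zero_iff hs]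
        rw [ae_iff] at hae
        exact hae
      have emb := MeasurableEmbedding.subtype_coe hs
      set Q : Measure s := P.comap Subtype.val with hQdef
      haveI : IsProbabilityMeasure Q := by
        constructor
        rw [hQdef, emb.comap_apply]
        simpa [Set.image_univ, Subtype.range_coe] using hPs
      have hQmap : Q.map Subtype.val = P := by
        rw [hQdef, emb.map_comap, Subtype.range_coe]
        exact Measure.restrict_eq_self_of_ae_mem hae
      set f' : Fin m → s → ℝ := fun i a => f (j'.succAbove i) a.val with hf'def
      have hf' : ∀ i, Measurable (f' i) := fun i => (hf _).comp measurable_subtype_coe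
      have hQint : ∀ (k : Fin (m+1)), Integrable (fun a : s => f k a.val) Q := by
        intro k
        have := (emb.integrable_map_iff (μ := Q) (g := f k)).1
        rw [hQmap] at this
        exact this (hint k)
      have hQeq : ∀ (k : Fin (m+1)), ∫ a : s, f k a.val ∂Q = ∫ ω, f k ω ∂P := by
        intro k
        rw [show (∫ ω, f k ω ∂P) = ∫ y, f k y ∂(Q.map Subtype.val) from by rw [hQmap],
          emb.integral_map (g := f k)]
      obtain ⟨x', p', hp0', hp1', hmom'⟩ := ih f' hf' Q (fun i => hQint _)
      have hmomP : ∀ i : Fin m,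
          ∫ ω, f (j'.succAbove i) ω ∂P = ∑ k, p' k * f (j'.succAbove i) (x' k).val := by
        intro i
        rw [← hQeq]
        exact hmom' i
      have hsat : ∀ k, ∑ i, c i * f i (x' k).val = d := fun k => (x' k).2
      have hintrel : ∑ i, c i * ∫ ω, f i ω ∂P = d := by
        have h4 : ∫ ω, (∑ i, c i * f i ω) ∂P = ∑ i, c i * ∫ ω, f i ω ∂P := by
          rw [integral_finset_sum _ fun i _ => (hint i).const_mul (c i)]
          exact Finset.sum_congr rfl fun i _ => integral_const_mul _ _
        have h5 : ∫ ω, (∑ i, c i * f i ω) ∂P = d := by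
          rw [integral_congr_ae hae]
          simp
        rw [← h4, h5]
      refine ⟨Fin.cons (x' 0).val (fun k => (x' k).val), Fin.cons 0 p', ?_, ?_, ?_⟩
      · intro j
        refine Fin.cases ?_ ?_ j
        · simp
        · intro k
          simpa using hp0' k
      · rw [Fin.sum_cons]
        simpa using hp1'
      · intro i
        have hred : ∑ j : Fin (m+2),
            (Fin.cons 0 p' : Fin (m+2) → ℝ) j *
              f i ((Fin.cons (x' 0).val (fun k => (x' k).val) : Fin (m+2) → Ω) j)
            = ∑ k : Fin (m+1), p' k * f i (x' k).val := by
          rw [Fin.sum_univ_succ]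
          simp
        rw [hred]
        by_cases hij : i = j'
        · subst hij
          have key1 : ∀ k, c i * f i (x' k).val
              = d - ∑ i' : Fin m, c (i.succAbove i') * f (i.succAbove i') (x' k).val := by
            intro k
            have := hsat k
            rw [Fin.sum_univ_succAbove _ i] at this
            linarith
          have key2 : c i * ∫ ω, f i ω ∂P
              = d - ∑ i' : Fin m, c (i.succAbove i') * ∫ ω, f (i.succAbove i') ω ∂P := by
            have := hintrel
            rw [Fin.sum_univ_succAbove _ i] at this
            linarith
          have key3 : c i * (∑ k, p' k * f i (x' k).val)
              = d - ∑ i' : Fin m, c (i.succAbove i') * ∫ ω, f (i.succAbove i') ω ∂P := by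
            have e1 : c i * (∑ k, p' k * f i (x' k).val)
                = ∑ k, p' k * (c i * f i (x' k).val) := by
              rw [Finset.mul_sum]
              exact Finset.sum_congr rfl fun k _ => by ring
            rw [e1]
            have e2 : ∑ k, p' k * (c i * f i (x' k).val)
                = ∑ k, (p' k * d - ∑ i' : Fin m,
                    p' k * (c (i.succAbove i') * f (i.succAbove i') (x' k).val)) := by
              refine Finset.sum_congr rfl fun k _ => ?_
              rw [key1 k, mul_sub, Finset.mul_sum]
            rw [e2, Finset.sum_sub_distrib, ← Finset.sum_mul, hp1', one_mul]
            congr 1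
            rw [Finset.sum_comm]
            refine Finset.sum_congr rfl fun i' _ => ?_
            rw [hmomP i', Finset.mul_sum]
            exact Finset.sum_congr rfl fun k _ => by ring
          exact mul_left_cancel₀ hj' (key2.trans key3.symm)
        · obtain ⟨i0, rfl⟩ := Fin.exists_succAbove_eq hij
          exact hmomP i0

theorem stmt_0 {Ω : Type*} [MeasurableSpace Ω] (K : ℕ) (f : Fin K → Ω → ℝ)
    (hf : ∀ i, Measurable (f i)) (P : Measure Ω) [IsProbabilityMeasure P]
    (hint : ∀ i, Integrable (f i) P) :
    ∃ (x : Fin (K + 1) → Ω) (w : Fin (K + 1) → ENNReal),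
      (∑ j, w j = 1) ∧
      ∀ i, ∫ a, f i a ∂P
          = ∫ a, f i a ∂(Measure.sum (fun j : Fin (K + 1) => w j • Measure.dirac (x j))) := by
  obtain ⟨x, p, hp0, hp1, hmom⟩ := key_moment K f hf P hint
  refine ⟨x, fun j => ENNReal.ofReal (p j), ?_, ?_⟩
  · rw [← ENNReal.ofReal_sum_of_nonneg (fun j _ => hp0 j), hp1, ENNReal.ofReal_one]
  · intro i
    rw [integral_discrete x p hp0 (hf i)]
    exact hmom i
end

section
/- For every a₀, a₁, …, a_n ∈ ℝ, the function g(x) = H₂(x) + Σ_{i=0}^{n} a_i x^i has the property that its derivative g' has at most n+1 roots in the open interval (0,1). -/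
open Set Real

noncomputable def binEnt (x : ℝ) : ℝ := -x * Real.log x - (1 - x) * Real.log (1 - x)

noncomputable def psi : ℕ → ℝ → ℝ
  | 0 => fun x => Real.log (1 - x) - Real.log x
  | (k+1) => fun x => (k.factorial : ℝ) * ((-1)^(k+1) * x^(-(k+1:ℤ)) - (1-x)^(-(k+1:ℤ)))

lemma psi_hasDerivAt (k : ℕ) {x : ℝ} (hx : x ∈ Set.Ioo (0:ℝ) 1) :
    HasDerivAt (psi k) (psi (k+1) x) x := by
  have hx0 : x ≠ 0 := ne_of_gt hx.1
  have hx1 : (1:ℝ) - x ≠ 0 := by have := hx.2; intro h; nlinarith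
  have h1x : HasDerivAt (fun y : ℝ => 1 - y) (-1) x := by
    simpa using (hasDerivAt_id x).const_sub 1
  match k with
  | 0 =>
    have hl1 : HasDerivAt (fun y : ℝ => Real.log (1 - y)) (-(1 - x)⁻¹) x := by
      have := (Real.hasDerivAt_log hx1).comp x h1x
      simpa [Function.comp_def] using this
    have hl2 : HasDerivAt (fun y : ℝ => Real.log y) (1 / x) x := by
      simpa [one_div] using Real.hasDerivAt_log hx0
    have := hl1.sub hl2
    refine this.congr_deriv ?_
    simp only [psi, Nat.factorial_zero, Nat.cast_zero, zero_add, zpow_neg_one]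
    field_simp
    ring
  | (k+1) =>
    have hp1 := hasDerivAt_zpow (-(k+1:ℤ)) x (Or.inl hx0)
    have hp2 := (hasDerivAt_zpow (-(k+1:ℤ)) (1-x) (Or.inl hx1)).comp x h1x
    have := ((hp1.const_mul ((-1:ℝ)^(k+1))).sub hp2).const_mul ((k.factorial : ℝ))
    refine this.congr_deriv ?_
    show _ = ((k+1).factorial : ℝ) * ((-1)^(k+2) * x^(-(k+2:ℤ)) - (1-x)^(-(k+2:ℤ)))
    have e1 : (-(k+1:ℤ) - 1) = -(k+2:ℤ) := by ring
    rw [e1]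
    push_cast [Nat.factorial_succ, pow_succ]
    ring

lemma psi_roots (k : ℕ) : {x ∈ Set.Ioo (0:ℝ) 1 | psi k x = 0} ⊆ {(1/2 : ℝ)} := by
  rintro x ⟨hx, hr⟩
  have hx0 : (0:ℝ) < x := hx.1
  have hx1 : (0:ℝ) < 1 - x := by have := hx.2; linarith
  match k with
  | 0 =>
    simp only [psi, sub_eq_zero] at hr
    have := Real.log_injOn_pos (mem_Ioi.mpr hx1) (mem_Ioi.mpr hx0) hr
    simp only [mem_singleton_iff]
    linarith
  | (k+1) =>
    simp only [psi] at hr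
    have hfac : ((k.factorial : ℝ)) ≠ 0 := by positivity
    have hr2 : (-1:ℝ)^(k+1) * x^(-(k+1:ℤ)) = (1-x)^(-(k+1:ℤ)) := by
      have := mul_eq_zero.mp hr
      rcases this with h | h
      · exact absurd h hfac
      · linarith [sub_eq_zero.mp h]
    have hpos : (0:ℝ) < (1-x)^(-(k+1:ℤ)) := zpow_pos hx1 _
    have hxpos : (0:ℝ) < x^(-(k+1:ℤ)) := zpow_pos hx0 _
    rcases Nat.even_or_odd (k+1) with he | ho
    · rw [he.neg_one_pow, one_mul] at hr2
      have : x = 1 - x := by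
        rw [zpow_neg, zpow_neg, inv_inj] at hr2
        have h3 : x ^ (k+1) = (1-x) ^ (k+1) := by
          have := hr2
          rw [show ((k:ℤ)+1) = ((k+1 : ℕ) : ℤ) by push_cast; ring,
            zpow_natCast, zpow_natCast] at this
          exact this
        exact (pow_left_strictMonoOn₀ (Nat.succ_ne_zero k)).injOn
          (le_of_lt hx0) (le_of_lt hx1) h3
      simp only [mem_singleton_iff]; linarith
    · rw [ho.neg_one_pow] at hr2
      nlinarith

open Set

lemma rolle_card {f : ℝ → ℝ} (hf : ∀ x ∈ Set.Ioo (0:ℝ) 1, ContinuousAt f x)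
    {m : ℕ} (h : {x ∈ Set.Ioo (0:ℝ) 1 | deriv f x = 0}.encard ≤ m) :
    {x ∈ Set.Ioo (0:ℝ) 1 | f x = 0}.encard ≤ m + 1 := by
  by_contra hc
  push_neg at hc
  have h2 : (↑(m + 2) : ℕ∞) ≤ {x ∈ Set.Ioo (0:ℝ) 1 | f x = 0}.encard := by
    have h3 := Order.add_one_le_of_lt hc
    calc (↑(m+2) : ℕ∞) = ↑m + 1 + 1 := by push_cast; ring
      _ ≤ _ := h3
  obtain ⟨t, hts, htc⟩ := Set.exists_subset_encard_eq h2
  have htfin : t.Finite := Set.finite_of_encard_eq_coe htc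
  set s : Finset ℝ := htfin.toFinset with hs
  have hcard : s.card = m + 2 := by
    have := htfin.encard_eq_coe_toFinset_card
    rw [htc] at this
    exact_mod_cast this.symm
  set e := s.orderIsoOfFin hcard with he
  have hmem : ∀ i : Fin (m+2), (e i : ℝ) ∈ {x ∈ Set.Ioo (0:ℝ) 1 | f x = 0} := by
    intro i
    exact hts (htfin.mem_toFinset.mp (e i).2)
  have key : ∀ i : Fin (m+1), ∃ c ∈ Set.Ioo ((e i.castSucc : ℝ)) (e i.succ : ℝ), deriv f c = 0 := by
    intro i
    have hlt : (e i.castSucc : ℝ) < e i.succ := by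
      have : i.castSucc < i.succ := Fin.castSucc_lt_succ
      exact_mod_cast e.strictMono this
    have hsub : Set.Icc ((e i.castSucc : ℝ)) (e i.succ : ℝ) ⊆ Set.Ioo (0:ℝ) 1 := by
      intro y hy
      have h1 := (hmem i.castSucc).1
      have h2 := (hmem i.succ).1
      exact ⟨lt_of_lt_of_le h1.1 hy.1, lt_of_le_of_lt hy.2 h2.2⟩
    exact exists_deriv_eq_zero hlt
      (fun y hy => (hf y (hsub hy)).continuousWithinAt)
      ((hmem i.castSucc).2.trans (hmem i.succ).2.symm)
  choose c hc1 hc2 using key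
  have hcmono : StrictMono c := by
    intro i j hij
    calc c i < (e i.succ : ℝ) := (hc1 i).2
      _ ≤ (e j.castSucc : ℝ) := by
          have : i.succ ≤ j.castSucc := by
            rw [Fin.succ_le_castSucc_iff]; exact hij
          exact_mod_cast e.monotone this
      _ < c j := (hc1 j).1
  have hrange : Set.range c ⊆ {x ∈ Set.Ioo (0:ℝ) 1 | deriv f x = 0} := by
    rintro _ ⟨i, rfl⟩
    refine ⟨?_, hc2 i⟩
    have h1 := (hmem i.castSucc).1
    have h2 := (hmem i.succ).1
    exact ⟨h1.1.trans (hc1 i).1, (hc1 i).2.trans h2.2⟩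
  have : (↑(m+1) : ℕ∞) ≤ {x ∈ Set.Ioo (0:ℝ) 1 | deriv f x = 0}.encard := by
    have := Set.encard_le_encard hrange
    have hr : (Set.range c).encard = ↑(m+1) := by
      rw [← Set.image_univ, hcmono.injective.encard_image,
        Set.encard_univ]
      simp [ENat.card_eq_coe_fintype_card]
    rw [hr] at this
    exact this
  have := this.trans h
  exact absurd (by exact_mod_cast this) (by omega)

theorem stmt_3 (n : ℕ) (a : Fin (n + 1) → ℝ) :
    {x ∈ Set.Ioo (0 : ℝ) 1 |
        deriv (fun x => binEnt x + ∑ i : Fin (n + 1), a i * x ^ (i : ℕ)) x = 0}.encard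
      ≤ n + 1 := by
  classical
  set P : Polynomial ℝ := ∑ i : Fin (n+1), Polynomial.C (a i) * Polynomial.X ^ (i : ℕ)
    with hP
  have hPeval : ∀ x : ℝ, P.eval x = ∑ i : Fin (n + 1), a i * x ^ (i : ℕ) := by
    intro x; simp [hP, Polynomial.eval_finset_sum]
  have hPdeg : P.natDegree ≤ n := by
    apply Polynomial.natDegree_sum_le_of_forall_le
    intro i _
    calc (Polynomial.C (a i) * Polynomial.X ^ (i:ℕ)).natDegree ≤ (i : ℕ) := (Polynomial.natDegree_C_mul_le (a i) (Polynomial.X ^ (i:ℕ))).trans (by simp)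
      _ ≤ n := by omega
  -- F k
  set F : ℕ → ℝ → ℝ := fun k x => psi k x + (Polynomial.derivative^[k+1] P).eval x with hF
  have hFderiv : ∀ k, ∀ x ∈ Set.Ioo (0:ℝ) 1, HasDerivAt (F k) (F (k+1) x) x := by
    intro k x hx
    have h1 := psi_hasDerivAt k hx
    have h2 := (Polynomial.derivative^[k+1] P).hasDerivAt x
    have := h1.add h2
    simp only [hF, Function.iterate_succ_apply'] at this ⊢; exact this
  have hFtop : F n = psi n := by
    have h0 : Polynomial.derivative^[n] (Polynomial.derivative P) = 0 := by
      rw [← Function.iterate_succ_apply]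
      exact Polynomial.iterate_derivative_eq_zero (by omega)
    funext x; simp [hF, h0]
  -- induction
  have main : ∀ j, j ≤ n → {x ∈ Set.Ioo (0:ℝ) 1 | F (n - j) x = 0}.encard ≤ (j + 1 : ℕ) := by
    intro j
    induction j with
    | zero =>
      intro _
      simp only [Nat.sub_zero, hFtop]
      calc {x ∈ Set.Ioo (0:ℝ) 1 | psi n x = 0}.encard
          ≤ ({(1/2:ℝ)} : Set ℝ).encard := Set.encard_le_encard (psi_roots n)
        _ = 1 := Set.encard_singleton _
        _ ≤ (0 + 1 : ℕ) := by norm_num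
    | succ j ih =>
      intro hj
      have hj' : j ≤ n := by omega
      have hidx : n - j = (n - (j+1)) + 1 := by omega
      have hcont : ∀ x ∈ Set.Ioo (0:ℝ) 1, ContinuousAt (F (n - (j+1))) x := fun x hx =>
        (hFderiv _ x hx).continuousAt
      have hset : {x ∈ Set.Ioo (0:ℝ) 1 | deriv (F (n - (j+1))) x = 0}
          = {x ∈ Set.Ioo (0:ℝ) 1 | F (n - j) x = 0} := by
        ext x
        simp only [Set.mem_setOf_eq, and_congr_right_iff]
        intro hx
        rw [(hFderiv _ x hx).deriv, hidx]
      have := rolle_card hcont (m := j + 1) (by rw [hset]; exact ih hj')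
      exact_mod_cast this
  have key := main n le_rfl
  rw [Nat.sub_self] at key
  have hset2 : {x ∈ Set.Ioo (0 : ℝ) 1 |
      deriv (fun x => binEnt x + ∑ i : Fin (n + 1), a i * x ^ (i : ℕ)) x = 0}
      = {x ∈ Set.Ioo (0:ℝ) 1 | F 0 x = 0} := by
    ext x
    simp only [Set.mem_setOf_eq, and_congr_right_iff]
    intro hx
    have hx0 : x ≠ 0 := ne_of_gt hx.1
    have hx1 : (1:ℝ) - x ≠ 0 := by have := hx.2; intro h; nlinarith
    have h1x : HasDerivAt (fun y : ℝ => 1 - y) (-1) x := by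
      simpa using (hasDerivAt_id x).const_sub 1
    have hb : HasDerivAt binEnt (psi 0 x) x := by
      have hm1 : HasDerivAt (fun y : ℝ => y * Real.log y) (Real.log x + 1) x :=
        Real.hasDerivAt_mul_log hx0
      have hm2 : HasDerivAt (fun y : ℝ => (1 - y) * Real.log (1 - y))
          ((Real.log (1 - x) + 1) * (-1)) x :=
        (Real.hasDerivAt_mul_log hx1).comp x h1x
      have := (hm1.neg).sub hm2
      have heq : (fun y : ℝ => -(y * Real.log y) - (1 - y) * Real.log (1 - y)) = binEnt := by
        funext y; simp only [binEnt]; ring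
      rw [← heq]
      refine this.congr_deriv ?_
      simp only [psi]
      ring
    have hg : HasDerivAt (fun x => binEnt x + ∑ i : Fin (n + 1), a i * x ^ (i : ℕ))
        (F 0 x) x := by
      have hp := P.hasDerivAt x
      have := hb.add hp
      simp only [hPeval] at this
      rw [hF]; exact this
    rw [hg.deriv]
  rw [hset2]
  exact_mod_cast key
end

section
/- Suppose the function g(x) = H₂(x) + Σ_{j=0}^{N} λ_j x^j (with λ_j ∈ ℝ) has zeros at K distinct points α₁ < α₂ < ⋯ < α_K in (0,1), and moreover g'(α_i) = 0 for i = 2, …, K-1. Then K ≤ (N+4)/2. -/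
open Set Polynomial

lemma rolle_finset (f : ℝ → ℝ)
    (hf : ∀ x ∈ Set.Ioo (0:ℝ) 1, DifferentiableAt ℝ f x) :
    ∀ n : ℕ, ∀ s : Finset ℝ, s.card ≤ n → ↑s ⊆ Set.Ioo (0:ℝ) 1 → (∀ x ∈ s, f x = 0) →
    ∃ t : Finset ℝ, ↑t ⊆ Set.Ioo (0:ℝ) 1 ∧ s.card ≤ t.card + 1 ∧
      (∀ x ∈ t, deriv f x = 0) ∧ (∀ x ∈ t, x ∉ s ∧ ∃ y ∈ s, y < x) := by
  classical
  intro n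
  induction n with
  | zero =>
    intro s hcard _ _
    exact ⟨∅, by simp, by simp only [Finset.card_empty]; omega, by simp, by simp⟩
  | succ n ih =>
    intro s hcard hsub hz
    by_cases h1 : s.card ≤ 1
    · exact ⟨∅, by simp, by simp only [Finset.card_empty]; omega, by simp, by simp⟩
    · push_neg at h1
      have hne : s.Nonempty := Finset.card_pos.mp (by omega)
      set a := s.min' hne with ha
      have haS : a ∈ s := s.min'_mem hne
      set s' := s.erase a with hs'
      have hcard' : s'.card = s.card - 1 := Finset.card_erase_of_mem haS
      have hne' : s'.Nonempty := Finset.card_pos.mp (by omega)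
      set b := s'.min' hne' with hb
      have hbS' : b ∈ s' := s'.min'_mem hne'
      have hbS : b ∈ s := Finset.mem_of_mem_erase hbS'
      have hab : a < b :=
        lt_of_le_of_ne (s.min'_le b hbS) (Ne.symm (Finset.ne_of_mem_erase hbS'))
      have haI : a ∈ Set.Ioo (0:ℝ) 1 := hsub haS
      have hbI : b ∈ Set.Ioo (0:ℝ) 1 := hsub hbS
      have hIcc : Set.Icc a b ⊆ Set.Ioo (0:ℝ) 1 := Set.Icc_subset_Ioo haI.1 hbI.2
      have hcont : ContinuousOn f (Set.Icc a b) := fun x hx =>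
        ((hf x (hIcc hx)).continuousAt).continuousWithinAt
      obtain ⟨c, hcI, hc0⟩ := exists_deriv_eq_zero hab hcont (by rw [hz a haS, hz b hbS])
      -- induction on s'
      obtain ⟨t', ht'sub, ht'card, ht'z, ht'aux⟩ := ih s' (by omega)
        (fun x hx => hsub (Finset.mem_of_mem_erase hx))
        (fun x hx => hz x (Finset.mem_of_mem_erase hx))
      have hbig : ∀ x ∈ t', b < x := by
        intro x hx
        obtain ⟨-, y, hy, hyx⟩ := ht'aux x hx
        exact lt_of_le_of_lt (s'.min'_le y hy) hyx
      have hct' : c ∉ t' := fun h => absurd (hbig c h) (not_lt.mpr (le_of_lt hcI.2))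
      refine ⟨insert c t', ?_, ?_, ?_, ?_⟩
      · intro x hx
        rcases Finset.mem_insert.mp hx with rfl | hx
        · exact ⟨lt_trans haI.1 hcI.1, lt_trans hcI.2 hbI.2⟩
        · exact ht'sub hx
      · rw [Finset.card_insert_of_notMem hct']
        omega
      · intro x hx
        rcases Finset.mem_insert.mp hx with rfl | hx
        · exact hc0
        · exact ht'z x hx
      · intro x hx
        rcases Finset.mem_insert.mp hx with rfl | hx
        · constructor
          · intro hcs
            have hca : x ≠ a := ne_of_gt hcI.1
            have : x ∈ s' := Finset.mem_erase.mpr ⟨hca, hcs⟩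
            exact absurd (s'.min'_le x this) (not_le.mpr hcI.2)
          · exact ⟨a, haS, hcI.1⟩
        · obtain ⟨hxns', y, hy, hyx⟩ := ht'aux x hx
          constructor
          · intro hxs
            have hxa : x ≠ a := ne_of_gt (lt_trans hab (hbig x hx))
            exact hxns' (Finset.mem_erase.mpr ⟨hxa, hxs⟩)
          · exact ⟨y, Finset.mem_of_mem_erase hy, hyx⟩

lemma hasDerivAt_binEnt {x : ℝ} (hx0 : x ≠ 0) (hx1 : x ≠ 1) :
    HasDerivAt binEnt (Real.log (1 - x) - Real.log x) x := by
  have h2 : HasDerivAt (fun y : ℝ => 1 - y) (-1) x := by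
    simpa using (hasDerivAt_id x).const_sub (1:ℝ)
  have h1 : HasDerivAt (fun y : ℝ => y * Real.log y) (Real.log x + 1) x :=
    Real.hasDerivAt_mul_log hx0
  have h1x : (1:ℝ) - x ≠ 0 := sub_ne_zero.mpr (Ne.symm hx1)
  have h3 : HasDerivAt (fun y : ℝ => (1 - y) * Real.log (1 - y))
      ((Real.log (1 - x) + 1) * (-1)) x :=
    (Real.hasDerivAt_mul_log h1x).comp x h2
  have h := (h1.neg).sub h3
  have heq : binEnt = fun y : ℝ => -(y * Real.log y) - (1 - y) * Real.log (1 - y) := by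
    funext y; simp [binEnt]
  rw [heq]
  refine h.congr_deriv ?_
  ring

theorem stmt_5 (N K : ℕ) (lam : Fin (N + 1) → ℝ) (α : Fin K → ℝ)
    (g : ℝ → ℝ)
    (hg : g = fun x => binEnt x + ∑ j : Fin (N + 1), lam j * x ^ (j : ℕ))
    (hmono : StrictMono α)
    (hmem : ∀ i, α i ∈ Set.Ioo (0 : ℝ) 1)
    (hzero : ∀ i, g (α i) = 0)
    (hderiv : ∀ i : Fin K, (i : ℕ) ≠ 0 → (i : ℕ) ≠ K - 1 → deriv g (α i) = 0) :
    (K : ℝ) ≤ (N + 4) / 2 := by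
  classical
  by_cases hK2 : K ≤ 2
  · have hN : (0:ℝ) ≤ (N:ℝ) := Nat.cast_nonneg N
    have : (K:ℝ) ≤ 2 := by exact_mod_cast hK2
    linarith
  push_neg at hK2
  -- the polynomial
  set P : Polynomial ℝ := ∑ j : Fin (N+1), Polynomial.C (lam j) * Polynomial.X ^ (j:ℕ) with hP
  have hPeval : ∀ x : ℝ, P.eval x = ∑ j : Fin (N+1), lam j * x ^ (j:ℕ) := by
    intro x
    rw [hP, Polynomial.eval_finset_sum]
    simp
  have hgP : g = fun x => binEnt x + P.eval x := by
    rw [hg]; funext x; rw [hPeval]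
  set g1 : ℝ → ℝ := fun x => Real.log (1-x) - Real.log x + (Polynomial.derivative P).eval x with hg1
  set g2 : ℝ → ℝ := fun x => -(1-x)⁻¹ - x⁻¹ +
    (Polynomial.derivative (Polynomial.derivative P)).eval x with hg2
  have hd1 : ∀ x ∈ Set.Ioo (0:ℝ) 1, HasDerivAt g (g1 x) x := by
    intro x hx
    rw [hgP]
    exact (hasDerivAt_binEnt (ne_of_gt hx.1) (ne_of_lt hx.2)).add (P.hasDerivAt x)
  have hderiv_g : ∀ x ∈ Set.Ioo (0:ℝ) 1, deriv g x = g1 x := fun x hx => (hd1 x hx).deriv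
  have hd2 : ∀ x ∈ Set.Ioo (0:ℝ) 1, HasDerivAt g1 (g2 x) x := by
    intro x hx
    have hx0 : x ≠ 0 := ne_of_gt hx.1
    have h1x : (1:ℝ) - x ≠ 0 := sub_ne_zero.mpr (ne_of_gt hx.2)
    have hsub : HasDerivAt (fun y : ℝ => 1 - y) (-1) x := by
      simpa using (hasDerivAt_id x).const_sub (1:ℝ)
    have hlog1 : HasDerivAt (fun y : ℝ => Real.log (1 - y)) ((1-x)⁻¹ * (-1)) x :=
      (Real.hasDerivAt_log h1x).comp x hsub
    have hlogx : HasDerivAt Real.log x⁻¹ x := Real.hasDerivAt_log hx0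
    have h := (hlog1.sub hlogx).add ((Polynomial.derivative P).hasDerivAt x)
    rw [hg1]
    refine h.congr_deriv ?_
    rw [hg2]; ring
  have hev : ∀ x ∈ Set.Ioo (0:ℝ) 1, deriv g =ᶠ[nhds x] g1 := by
    intro x hx
    exact Filter.eventuallyEq_of_mem (isOpen_Ioo.mem_nhds hx) hderiv_g
  have hdiffg : ∀ x ∈ Set.Ioo (0:ℝ) 1, DifferentiableAt ℝ g x :=
    fun x hx => (hd1 x hx).differentiableAt
  have hdiffg' : ∀ x ∈ Set.Ioo (0:ℝ) 1, DifferentiableAt ℝ (deriv g) x := by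
    intro x hx
    exact (Filter.EventuallyEq.differentiableAt_iff (hev x hx)).mpr (hd2 x hx).differentiableAt
  have hderiv2 : ∀ x ∈ Set.Ioo (0:ℝ) 1, deriv (deriv g) x = g2 x := by
    intro x hx
    rw [Filter.EventuallyEq.deriv_eq (hev x hx)]
    exact (hd2 x hx).deriv
  -- the finsets
  set S : Finset ℝ := Finset.image α Finset.univ with hS
  have hScard : S.card = K := by
    rw [hS, Finset.card_image_of_injective _ hmono.injective, Finset.card_univ, Fintype.card_fin]
  have hSsub : ↑S ⊆ Set.Ioo (0:ℝ) 1 := by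
    intro x hx
    simp only [hS, Finset.coe_image, Set.mem_image] at hx
    obtain ⟨i, -, rfl⟩ := hx
    exact hmem i
  have hSz : ∀ x ∈ S, g x = 0 := by
    intro x hx
    simp only [hS, Finset.mem_image] at hx
    obtain ⟨i, -, rfl⟩ := hx
    exact hzero i
  obtain ⟨T, hTsub, hTcard, hTz, hTaux⟩ := rolle_finset g hdiffg S.card S le_rfl hSsub hSz
  -- interior alpha points
  have hK0 : (0:ℕ) < K := by omega
  have hKm1 : K - 1 < K := by omega
  set A : Finset ℝ := (S.erase (α ⟨0, hK0⟩)).erase (α ⟨K-1, hKm1⟩) with hA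
  have hAcard : K - 2 ≤ A.card := by
    have h1 : (S.erase (α ⟨0, hK0⟩)).card - 1 ≤ A.card := Finset.pred_card_le_card_erase
    have h2 : S.card - 1 ≤ (S.erase (α ⟨0, hK0⟩)).card := Finset.pred_card_le_card_erase
    omega
  have hAsubS : A ⊆ S := (Finset.erase_subset _ _).trans (Finset.erase_subset _ _)
  have hAz : ∀ x ∈ A, deriv g x = 0 := by
    intro x hx
    have hxS : x ∈ S := hAsubS hx
    simp only [hS, Finset.mem_image] at hxS
    obtain ⟨i, -, rfl⟩ := hxS
    have hne1 : α i ≠ α ⟨K-1, hKm1⟩ := Finset.ne_of_mem_erase hx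
    have hne0 : α i ≠ α ⟨0, hK0⟩ := Finset.ne_of_mem_erase (Finset.mem_of_mem_erase hx)
    refine hderiv i ?_ ?_
    · intro h; exact hne0 (congrArg α (Fin.ext h))
    · intro h; exact hne1 (congrArg α (Fin.ext h))
  have hdisj : Disjoint T A := by
    rw [Finset.disjoint_left]
    intro x hxT hxA
    exact (hTaux x hxT).1 (hAsubS hxA)
  set U : Finset ℝ := T ∪ A with hU
  have hUcard : U.card = T.card + A.card := Finset.card_union_of_disjoint hdisj
  have hUsub : ↑U ⊆ Set.Ioo (0:ℝ) 1 := by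
    intro x hx
    rcases Finset.mem_union.mp hx with h | h
    · exact hTsub h
    · exact hSsub (hAsubS h)
  have hUz : ∀ x ∈ U, deriv g x = 0 := by
    intro x hx
    rcases Finset.mem_union.mp hx with h | h
    · exact hTz x h
    · exact hAz x h
  obtain ⟨V, hVsub, hVcard, hVz, -⟩ := rolle_finset (deriv g) hdiffg' U.card U le_rfl hUsub hUz
  -- polynomial degree bound
  set R : Polynomial ℝ := Polynomial.derivative (Polynomial.derivative P) with hR
  set Q : Polynomial ℝ := -Polynomial.C 1 + Polynomial.X * (Polynomial.C 1 - Polynomial.X) * R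
    with hQ
  have hQne : Q ≠ 0 := by
    intro h
    have : Q.eval 0 = 0 := by rw [h]; simp
    rw [hQ] at this
    simp at this
  have hPdeg : P.natDegree ≤ N := by
    rw [hP]
    refine Polynomial.natDegree_sum_le_of_forall_le _ _ ?_
    intro j _
    refine le_trans (Polynomial.natDegree_C_mul_le _ _) ?_
    rw [Polynomial.natDegree_X_pow]
    omega
  have hRdeg : R.natDegree ≤ N - 2 := by
    rw [hR]
    refine le_trans (Polynomial.natDegree_derivative_le _) ?_
    have := Polynomial.natDegree_derivative_le P
    omega
  have hQdeg : Q.natDegree ≤ N := by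
    by_cases hN2 : 2 ≤ N
    · refine le_trans (Polynomial.natDegree_add_le _ _) ?_
      simp only [Polynomial.natDegree_neg, Polynomial.natDegree_C, max_le_iff]
      refine ⟨by omega, ?_⟩
      refine le_trans (Polynomial.natDegree_mul_le) ?_
      have h1 : (Polynomial.X * (Polynomial.C 1 - Polynomial.X) : Polynomial ℝ).natDegree ≤ 2 := by
        refine le_trans (Polynomial.natDegree_mul_le) ?_
        have : (Polynomial.C 1 - Polynomial.X : Polynomial ℝ).natDegree ≤ 1 := by
          refine le_trans (Polynomial.natDegree_sub_le _ _) ?_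
          simp
        simp only [Polynomial.natDegree_X]
        omega
      omega
    · have hR0 : R = 0 := by
        have hPd : (Polynomial.derivative P).natDegree = 0 := by
          have := Polynomial.natDegree_derivative_le P
          omega
        obtain ⟨c, hc⟩ := Polynomial.natDegree_eq_zero.mp hPd
        rw [hR, ← hc, Polynomial.derivative_C]
      rw [hQ, hR0]
      simp
  -- V consists of roots of Q
  have hVQ : V ⊆ Q.roots.toFinset := by
    intro x hxV
    have hxI : x ∈ Set.Ioo (0:ℝ) 1 := hVsub hxV
    have hx0 : x ≠ 0 := ne_of_gt hxI.1
    have h1x : (1:ℝ) - x ≠ 0 := sub_ne_zero.mpr (ne_of_gt hxI.2)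
    have hz2 : g2 x = 0 := by rw [← hderiv2 x hxI]; exact hVz x hxV
    rw [hg2] at hz2
    have hQx : Q.eval x = 0 := by
      rw [hQ]
      simp only [Polynomial.eval_add, Polynomial.eval_neg, Polynomial.eval_C,
        Polynomial.eval_mul, Polynomial.eval_sub, Polynomial.eval_X]
      have hRx : Polynomial.eval x R = (1-x)⁻¹ + x⁻¹ := by
        rw [hR]; linarith [hz2]
      rw [hRx]
      field_simp
      ring
    rw [Multiset.mem_toFinset, Polynomial.mem_roots hQne]
    exact hQx
  have hVN : V.card ≤ N := by
    calc V.card ≤ Q.roots.toFinset.card := Finset.card_le_card hVQ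
      _ ≤ Multiset.card Q.roots := Multiset.toFinset_card_le _
      _ ≤ Q.natDegree := Polynomial.card_roots' Q
      _ ≤ N := hQdeg
  -- combine
  have hfin : 2 * K ≤ N + 4 := by omega
  have : (2:ℝ) * K ≤ (N:ℝ) + 4 := by exact_mod_cast hfin
  linarith
end
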